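/- Let (x_n)_{n≥1} be a sequence of positive real numbers, let a > 0 and 1 ≤ b ≤ 2, and suppose that x_{n+1} − x_n ≥ a·x_n^{(2−b)/2} for every n ≥ 1 and that x_1^{b/2} ≥ a. Then x_n ≥ (a·n)^{2/b}/8 for every n ≥ 1. -/

import Mathlib

lemma key_ineq_stmt16 (y a p : ℝ) (ha : 0 < a) (hay : a ≤ y) (hp1 : 1 ≤ p) (hp2 : p ≤ 2) :
    (y + a * (5/14)) ^ p ≤ y ^ p + a * y ^ (p - 1) := by
  have hy : 0 < y := lt_of_lt_of_le ha hay
  set t : ℝ := a * (5/14) / y with ht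
  have htpos : 0 < t := by positivity
  have hty : t * y = a * (5/14) := by rw [ht, div_mul_cancel₀ _ hy.ne']
  have hOt : t ≤ 5/14 := by rw [ht, div_le_iff₀ hy]; nlinarith
  have h1 : y + a*(5/14) = y * (1+t) := by nlinarith [hty]
  have h2 : (y*(1+t))^p = y^p * (1+t)^p := Real.mul_rpow hy.le (by positivity)
  have h3 : (1+t)^p ≤ (1+t)^(2:ℝ) := Real.rpow_le_rpow_of_exponent_le (by linarith) hp2
  have h4 : (1+t)^(2:ℝ) ≤ 1 + a / y := by
    rw [show (2:ℝ) = ((2:ℕ):ℝ) by norm_num, Real.rpow_natCast]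
    have hay' : a / y = t * (14/5) := by rw [div_eq_iff hy.ne']; nlinarith
    nlinarith
  have h5 : y^p * (1 + a/y) = y^p + a * y^(p-1) := by
    rw [Real.rpow_sub hy, Real.rpow_one]
    field_simp
  have hyp : (0:ℝ) ≤ y^p := (Real.rpow_pos_of_pos hy p).le
  calc (y + a*(5/14))^p = y^p * (1+t)^p := by rw [h1, h2]
    _ ≤ y^p * (1 + a/y) := mul_le_mul_of_nonneg_left (h3.trans h4) hyp
    _ = y^p + a * y^(p-1) := h5

/-- If a positive sequence satisfies `x_{n+1} − x_n ≥ a·x_n^{(2−b)/2}` for all `n ≥ 1`,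
with `a > 0`, `1 ≤ b ≤ 2` and `x_1^{b/2} ≥ a`, then `x_n ≥ (a·n)^{2/b}/8` for all
`n ≥ 1`. -/
theorem stmt_16 (x : ℕ → ℝ) (a b : ℝ) (ha : 0 < a) (hb1 : 1 ≤ b) (hb2 : b ≤ 2)
    (hpos : ∀ n, 1 ≤ n → 0 < x n)
    (hrec : ∀ n, 1 ≤ n → x (n + 1) - x n ≥ a * x n ^ ((2 - b) / 2))
    (hinit : x 1 ^ (b / 2) ≥ a) :
    ∀ n, 1 ≤ n → x n ≥ (a * n) ^ (2 / b) / 8 := by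
  have hb0 : 0 < b := lt_of_lt_of_le one_pos hb1
  have hp1 : 1 ≤ 2/b := by rw [le_div_iff₀ hb0]; linarith
  have hp2 : 2/b ≤ 2 := by rw [div_le_iff₀ hb0]; linarith
  have key : ∀ n, 1 ≤ n → x n ^ (b/2) ≥ a + ((n:ℝ)-1) * (a * (5/14)) := by
    intro n hn
    induction n, hn using Nat.le_induction with
    | base => simpa using hinit
    | succ n hn ih =>
      have hxn := hpos n hn
      set y := x n ^ (b/2) with hy
      have hn1 : (1:ℝ) ≤ (n:ℝ) := by exact_mod_cast hn
      have hya : a ≤ y := by nlinarith [ih]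
      have hypos : 0 < y := lt_of_lt_of_le ha hya
      have hk := key_ineq_stmt16 y a (2/b) ha hya hp1 hp2
      have hid1 : y ^ ((2:ℝ)/b) = x n := by
        rw [hy, ← Real.rpow_mul hxn.le, show (b/2) * (2/b) = 1 by field_simp,
          Real.rpow_one]
      have hid2 : y ^ ((2:ℝ)/b - 1) = x n ^ ((2-b)/2) := by
        rw [hy, ← Real.rpow_mul hxn.le]
        congr 1
        field_simp
      rw [hid1, hid2] at hk
      have hstep : x (n+1) ≥ (y + a*(5/14)) ^ ((2:ℝ)/b) := by
        have := hrec n hn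
        linarith
      have hmono : x (n+1) ^ (b/2) ≥ ((y + a*(5/14)) ^ ((2:ℝ)/b)) ^ (b/2) := by
        apply Real.rpow_le_rpow (by positivity) hstep (by positivity)
      have hid3 : ((y + a*(5/14)) ^ ((2:ℝ)/b)) ^ (b/2) = y + a*(5/14) := by
        rw [← Real.rpow_mul (by positivity), show (2/b) * (b/2) = 1 by field_simp,
          Real.rpow_one]
      rw [hid3] at hmono
      push_cast
      linarith
  intro n hn
  have hyk := key n hn
  have hn1 : (1:ℝ) ≤ (n:ℝ) := by exact_mod_cast hn
  have hxn := hpos n hn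
  have h1 : x n ^ (b/2) ≥ a * n * (5/14) := by nlinarith
  have hid : (x n ^ (b/2)) ^ ((2:ℝ)/b) = x n := by
    rw [← Real.rpow_mul hxn.le, show (b/2) * (2/b) = 1 by field_simp, Real.rpow_one]
  have h2 : x n ≥ (a * n * (5/14)) ^ ((2:ℝ)/b) := by
    rw [← hid]
    exact Real.rpow_le_rpow (by positivity) h1 (by positivity)
  have h3 : (a*(n:ℝ)*(5/14))^((2:ℝ)/b) = (a*n)^((2:ℝ)/b) * ((5:ℝ)/14)^((2:ℝ)/b) :=
    Real.mul_rpow (by positivity) (by norm_num)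
  have h4 : ((5:ℝ)/14)^((2:ℝ)/b) ≥ 1/8 := by
    have h5 : ((5:ℝ)/14)^(2:ℝ) ≤ ((5:ℝ)/14)^((2:ℝ)/b) :=
      Real.rpow_le_rpow_of_exponent_ge (by norm_num) (by norm_num) hp2
    rw [show (2:ℝ) = ((2:ℕ):ℝ) by norm_num, Real.rpow_natCast] at h5
    nlinarith
  have h5 : (0:ℝ) ≤ (a*(n:ℝ))^((2:ℝ)/b) := Real.rpow_nonneg (by positivity) _
  nlinarith [h2, h3, h4, h5]
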